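/- Let a, b ∈ ℝ with -1 < a < 0 and b < 0, and let z₀ := W₀(-e/a). Then z₀ > 0, the point x₀ := b·(1 - z₀) lies in (0, b·ln|a|), it is the unique critical point of f(x) = (1 + a·exp(-x/b))·x on (0, b·ln|a|), and f''(x₀) < 0, so x₀ is a local maximum of f. -/

import Mathlib

open Real

lemma gmono14 : StrictMonoOn (fun z : ℝ => z * Real.exp z) (Set.Ici (-1 : ℝ)) := by
  have hd : ∀ x : ℝ, HasDerivAt (fun z : ℝ => z * Real.exp z)
      (1 * Real.exp x + x * Real.exp x) x :=
    fun x => (hasDerivAt_id x).mul (Real.hasDerivAt_exp x)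
  apply strictMonoOn_of_deriv_pos (convex_Ici _)
  · exact (continuous_id.mul Real.continuous_exp).continuousOn
  · intro x hx
    rw [interior_Ici] at hx
    rw [(hd x).deriv]
    have h1 : 0 < 1 + x := by linarith [Set.mem_Ioi.mp (by exact hx : x ∈ Set.Ioi (-1:ℝ))]
    nlinarith [Real.exp_pos x]

theorem stmt_14 (a b : ℝ) (ha1 : -1 < a) (ha2 : a < 0) (hb : b < 0)
    (f : ℝ → ℝ) (hf : f = fun x : ℝ => (1 + a * Real.exp (-x / b)) * x)
    (z0 : ℝ) (hz0 : -1 ≤ z0 ∧ z0 * Real.exp z0 = -(Real.exp 1) / a)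
    (x0 : ℝ) (hx0 : x0 = b * (1 - z0)) :
    0 < z0 ∧ x0 ∈ Set.Ioo 0 (b * Real.log |a|) ∧
    (∀ x ∈ Set.Ioo 0 (b * Real.log |a|), deriv f x = 0 ↔ x = x0) ∧
    deriv (deriv f) x0 < 0 ∧ IsLocalMax f x0 := by
  obtain ⟨hz0m, hz0e⟩ := hz0
  have ha0 : a ≠ 0 := ne_of_lt ha2
  have hb0 : b ≠ 0 := ne_of_lt hb
  have hna : (0:ℝ) < -a := by linarith
  have hna1 : -a < 1 := by linarith
  have habs : |a| = -a := abs_of_neg ha2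
  set L := Real.log |a| with hL
  have hLa : Real.exp L = -a := by rw [hL, habs]; exact Real.exp_log hna
  have hLneg : L < 0 := by rw [hL, habs]; exact Real.log_neg hna hna1
  have he1 := Real.exp_pos 1
  -- z0 > 1
  have hz1 : 1 < z0 := by
    have h1 : (1:ℝ) ∈ Set.Ici (-1:ℝ) := by norm_num
    have h2 : z0 ∈ Set.Ici (-1:ℝ) := hz0m
    apply (gmono14.lt_iff_lt h1 h2).mp
    show 1 * Real.exp 1 < z0 * Real.exp z0
    rw [hz0e, one_mul]
    rw [lt_div_iff_of_neg ha2]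
    nlinarith
  have hz0pos : 0 < z0 := by linarith
  -- z0 < 1 - L
  have hzlt : z0 < 1 - L := by
    have h1 : z0 ∈ Set.Ici (-1:ℝ) := hz0m
    have h2 : (1 - L) ∈ Set.Ici (-1:ℝ) := by simp; linarith
    apply (gmono14.lt_iff_lt h1 h2).mp
    show z0 * Real.exp z0 < (1 - L) * Real.exp (1 - L)
    rw [hz0e]
    have hexp : Real.exp (1 - L) = Real.exp 1 / (-a) := by
      rw [Real.exp_sub, hLa]
    rw [hexp]
    rw [div_lt_iff_of_neg ha2]
    have : (1 - L) * (Real.exp 1 / -a) * a = -((1 - L) * Real.exp 1) := by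
      field_simp
    rw [this]
    nlinarith
  -- x0 in Ioo
  have hx0pos : 0 < x0 := by
    rw [hx0]; exact mul_pos_of_neg_of_neg hb (by linarith)
  have hx0lt : x0 < b * L := by
    rw [hx0]; exact mul_lt_mul_of_neg_left (by linarith) hb
  have hx0b : x0 / b = 1 - z0 := by rw [hx0]; field_simp
  -- derivative
  have hder : ∀ x : ℝ, HasDerivAt f
      (1 + a * Real.exp (-x/b) + a * Real.exp (-x/b) * (-1/b) * x) x := by
    intro x
    rw [hf]
    have h1 : HasDerivAt (fun x : ℝ => -x/b) (-1/b) x := by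
      simpa using ((hasDerivAt_id x).neg.div_const b)
    have h2 : HasDerivAt (fun x : ℝ => Real.exp (-x/b))
        (Real.exp (-x/b) * (-1/b)) x := (Real.hasDerivAt_exp _).comp x h1
    have h3 : HasDerivAt (fun x : ℝ => 1 + a * Real.exp (-x/b))
        (a * (Real.exp (-x/b) * (-1/b))) x := (h2.const_mul a).const_add 1
    have h4 := h3.mul (hasDerivAt_id x)
    refine h4.congr_deriv ?_
    simp [id]
    ring
  have hderiv : deriv f = fun x : ℝ =>
      1 + a * Real.exp (-x/b) + a * Real.exp (-x/b) * (-1/b) * x :=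
    funext fun x => (hder x).deriv
  -- closed form with G
  have hexpsub : ∀ x : ℝ, Real.exp (1 - x/b) = Real.exp 1 * Real.exp (-x/b) := by
    intro x
    rw [← Real.exp_add]
    congr 1
    ring
  have hform : ∀ x : ℝ, deriv f x
      = 1 + (a / Real.exp 1) * ((1 - x/b) * Real.exp (1 - x/b)) := by
    intro x
    rw [hderiv, hexpsub x]
    field_simp
    ring
  -- key iff
  have key : ∀ x : ℝ, deriv f x = 0 ↔
      (1 - x/b) * Real.exp (1 - x/b) = -(Real.exp 1) / a := by
    intro x
    rw [hform]
    set G := (1 - x/b) * Real.exp (1 - x/b) with hG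
    constructor
    · intro h
      rw [eq_div_iff ha0]
      have he1' : Real.exp 1 ≠ 0 := ne_of_gt he1
      field_simp at h
      linarith
    · intro h
      rw [eq_div_iff ha0] at h
      have he1' : Real.exp 1 ≠ 0 := ne_of_gt he1
      field_simp
      linarith
  -- monotone comparison helper
  have hcomp : ∀ x : ℝ, 0 < x →
      ((x < x0 → (1 - x/b) * Real.exp (1 - x/b) < -(Real.exp 1)/a) ∧
       (x0 < x → -(Real.exp 1)/a < (1 - x/b) * Real.exp (1 - x/b))) := by
    intro x hx
    have hxb : x / b < 0 := div_neg_of_pos_of_neg hx hb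
    have hmem : (1 - x/b) ∈ Set.Ici (-1:ℝ) := by simp; linarith
    have hmem0 : z0 ∈ Set.Ici (-1:ℝ) := hz0m
    have hinv : b⁻¹ < 0 := inv_lt_zero.mpr hb
    constructor
    · intro hlt
      have h1 : x0 / b < x / b := by
        rw [div_eq_inv_mul, div_eq_inv_mul]
        exact mul_lt_mul_of_neg_left hlt hinv
      have h2 : 1 - x/b < z0 := by rw [hx0b] at h1; linarith
      have := gmono14 hmem hmem0 h2
      simpa [hz0e] using this
    · intro hlt
      have h1 : x / b < x0 / b := by
        rw [div_eq_inv_mul, div_eq_inv_mul]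
        exact mul_lt_mul_of_neg_left hlt hinv
      have h2 : z0 < 1 - x/b := by rw [hx0b] at h1; linarith
      have := gmono14 hmem0 hmem h2
      simpa [hz0e] using this
  refine ⟨hz0pos, ⟨hx0pos, hx0lt⟩, ?_, ?_, ?_⟩
  · -- uniqueness of critical point
    intro x hx
    rw [key x]
    constructor
    · intro h
      have hxb : x / b < 0 := div_neg_of_pos_of_neg hx.1 hb
      have hmem : (1 - x/b) ∈ Set.Ici (-1:ℝ) := by simp; linarith
      have hmem0 : z0 ∈ Set.Ici (-1:ℝ) := hz0m
      have heq : 1 - x/b = z0 := by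
        apply gmono14.injOn hmem hmem0
        simp only [hz0e]
        exact h
      have : x / b = x0 / b := by rw [hx0b]; linarith
      field_simp at this
      exact this
    · intro h
      subst h
      rw [hx0b, ← hz0e]
      norm_num
  · -- second derivative negative
    have hder2 : HasDerivAt (deriv f)
        (a * Real.exp (-x0/b) * (-1/b) * (2 - x0/b)) x0 := by
      rw [hderiv]
      have h1 : HasDerivAt (fun x : ℝ => -x/b) (-1/b) x0 := by
        simpa using ((hasDerivAt_id x0).neg.div_const b)
      have h2 : HasDerivAt (fun x : ℝ => Real.exp (-x/b))
          (Real.exp (-x0/b) * (-1/b)) x0 := (Real.hasDerivAt_exp _).comp x0 h1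
      have h3 : HasDerivAt (fun x : ℝ => 1 + a * Real.exp (-x/b))
          (a * (Real.exp (-x0/b) * (-1/b))) x0 := (h2.const_mul a).const_add 1
      have h4 : HasDerivAt (fun x : ℝ => a * Real.exp (-x/b) * (-1/b) * x)
          ((a * (Real.exp (-x0/b) * (-1/b)) * (-1/b)) * x0
            + (a * Real.exp (-x0/b) * (-1/b)) * 1) x0 := by
        exact (((h2.const_mul a).mul_const (-1/b)).mul (hasDerivAt_id x0))
      have h5 := h3.add h4
      refine h5.congr_deriv ?_
      ring
    rw [hder2.deriv]
    have h6 : 2 - x0/b = 1 + z0 := by rw [hx0b]; ring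
    rw [h6]
    have hinvb : (0:ℝ) < -1/b := by
      rw [neg_div]
      have : (1:ℝ)/b < 0 := div_neg_of_pos_of_neg one_pos hb
      linarith
    apply mul_neg_of_neg_of_pos
    · exact mul_neg_of_neg_of_pos (mul_neg_of_neg_of_pos ha2 (Real.exp_pos _)) hinvb
    · linarith
  · -- local max
    have hcont : ContinuousAt f x0 := by
      rw [hf]
      fun_prop
    have hdiff : ∀ s : Set ℝ, DifferentiableOn ℝ f s :=
      fun s x _ => (hder x).differentiableAt.differentiableWithinAt
    have hae : a / Real.exp 1 < 0 := div_neg_of_neg_of_pos ha2 he1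
    have hkeyval : a / Real.exp 1 * (-(Real.exp 1)/a) = -1 := by field_simp
    apply isLocalMax_of_deriv_Ioo hx0pos hx0lt hcont (hdiff _) (hdiff _)
    · intro x hx
      have hG := (hcomp x hx.1).1 hx.2
      have := mul_lt_mul_of_neg_left hG hae
      rw [hkeyval] at this
      rw [hform]
      linarith
    · intro x hx
      have hG := (hcomp x (by linarith [hx.1])).2 hx.1
      have := mul_lt_mul_of_neg_left hG hae
      rw [hkeyval] at this
      rw [hform]
      linarith
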